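/- Let (X,d) be a complete b-metric space with coefficient s ≥ 1. For each i ∈ ℕ₀ let T_i : X → X be a weak quasi-contraction satisfying diam O_{T_j}(T_i x, T_i y) ≤ diam O_{T_j}(x,y) for all x,y ∈ X and all i,j ∈ ℕ₀. Let 𝔉 be a set of mappings f : ℕ₀ → ℕ₀ with property (F). Assume (P8): for each ε > 0 there exists n_ε ∈ ℕ such that for each f ∈ 𝔉 and each x,y ∈ X one has d(T_{f(n_ε)}T_{f(n_ε−1)}⋯T_{f(1)}T_{f(0)}x, T_{f(n_ε)}T_{f(n_ε−1)}⋯T_{f(1)}T_{f(0)}y) < ε. Then for each ε > 0 there exist δ > 0 and n ∈ ℕ such that for each f ∈ 𝔉 and each pair of sequences {x_i}_{i=0}^∞, {y_i}_{i=0}^∞ ⊆ X satisfying diam O_{T_{f(j)}}(x_{i+1}, T_{f(i)}x_i) ≤ δ and diam O_{T_{f(j)}}(y_{i+1}, T_{f(i)}y_i) ≤ δ for all i,j ∈ ℕ₀, one has d(x_i, y_i) < ε for all i ≥ n. -/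

import Mathlib

open Set Filter Topology

/-- The orbit of `x` under `T`: `{Tⁿ x : n ∈ ℕ₀}`. -/
def orb {X : Type*} (T : X → X) (x : X) : Set X := {y | ∃ n : ℕ, y = T^[n] x}

/-- The double orbit `O_T(x,y) = O_T(x) ∪ O_T(y)`. -/
def orb2 {X : Type*} (T : X → X) (x y : X) : Set X := orb T x ∪ orb T y

/-- The set of pairwise distances of points of `A`. -/
def distSet {X : Type*} (d : X → X → ℝ) (A : Set X) : Set ℝ :=
  {r | ∃ a ∈ A, ∃ b ∈ A, r = d a b}

/-- The diameter of `A` with respect to the distance function `d`. -/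
noncomputable def diamd {X : Type*} (d : X → X → ℝ) (A : Set X) : ℝ :=
  sSup (distSet d A)

/-- The distance from a point to a set: `inf {d x a : a ∈ A}`. -/
noncomputable def distPtSet {X : Type*} (d : X → X → ℝ) (x : X) (A : Set X) : ℝ :=
  sInf {r | ∃ a ∈ A, r = d x a}

/-- `d` is a b-metric on `X` with coefficient `s ≥ 1`. -/
def IsBMetric {X : Type*} (d : X → X → ℝ) (s : ℝ) : Prop :=
  1 ≤ s ∧ (∀ x y, 0 ≤ d x y) ∧ (∀ x y, d x y = 0 ↔ x = y) ∧ (∀ x y, d x y = d y x) ∧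
    (∀ x y z, d x y ≤ s * (d x z + d z y))

/-- `(X,d)` is a complete b-metric space with coefficient `s`. -/
def IsCompleteBMetric {X : Type*} (d : X → X → ℝ) (s : ℝ) : Prop :=
  IsBMetric d s ∧
    ∀ u : ℕ → X, (∀ ε > (0 : ℝ), ∃ N : ℕ, ∀ m ≥ N, ∀ n ≥ N, d (u m) (u n) < ε) →
      ∃ x : X, Tendsto (fun n => d (u n) x) atTop (𝓝 0)

/-- `ψ : [0,∞) → [0,∞)` is increasing, upper semicontinuous, `ψ 0 = 0`, `ψ t < t` for `t > 0`. -/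
def IsComparison (ψ : ℝ → ℝ) : Prop :=
  MonotoneOn ψ (Ici 0) ∧ UpperSemicontinuousOn ψ (Ici 0) ∧
    (∀ t ≥ (0 : ℝ), 0 ≤ ψ t) ∧ ψ 0 = 0 ∧ ∀ t > (0 : ℝ), ψ t < t

/-- `T` is a weak quasi-contraction: bounded orbits and
`d(Tx,Ty) ≤ ψ(diam O_T(x,y))` for some comparison function `ψ`. -/
def IsWeakQuasiContraction {X : Type*} (d : X → X → ℝ) (T : X → X) : Prop :=
  (∀ x y, BddAbove (distSet d (orb2 T x y))) ∧
    ∃ ψ : ℝ → ℝ, IsComparison ψ ∧ ∀ x y, d (T x) (T y) ≤ ψ (diamd d (orb2 T x y))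

/-- `E` is closed with respect to `d`-convergence. -/
def IsClosedD {X : Type*} (d : X → X → ℝ) (E : Set X) : Prop :=
  ∀ (u : ℕ → X) (x : X), (∀ n, u n ∈ E) →
    Tendsto (fun n => d (u n) x) atTop (𝓝 0) → x ∈ E

/-- `T` is O-b continuous: `x_n → x` implies `diam O_T(x_n, x) → 0`. -/
def OBContinuous {X : Type*} (d : X → X → ℝ) (T : X → X) : Prop :=
  ∀ (u : ℕ → X) (x : X), Tendsto (fun n => d (u n) x) atTop (𝓝 0) →
    Tendsto (fun n => diamd d (orb2 T (u n) x)) atTop (𝓝 0)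

/-- The composition `T_{f n} ∘ T_{f (n-1)} ∘ ⋯ ∘ T_{f 0}`. -/
def compSeq {X : Type*} (T : ℕ → X → X) (f : ℕ → ℕ) : ℕ → X → X
  | 0 => T (f 0)
  | n + 1 => fun x => T (f (n + 1)) (compSeq T f n x)

/-- Property (F): `𝓕` is closed under shifts by positive naturals. -/
def PropF (𝓕 : Set (ℕ → ℕ)) : Prop :=
  ∀ f ∈ 𝓕, ∀ p : ℕ, 0 < p → (fun i => f (i + p)) ∈ 𝓕


lemma mem_orb2_left {X : Type*} (T : X → X) (x y : X) : x ∈ orb2 T x y :=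
  Or.inl ⟨0, rfl⟩

lemma mem_orb2_right {X : Type*} (T : X → X) (x y : X) : y ∈ orb2 T x y :=
  Or.inr ⟨0, rfl⟩

lemma dist_le_diamd {X : Type*} {d : X → X → ℝ} {A : Set X}
    (hb : BddAbove (distSet d A)) {a b : X} (ha : a ∈ A) (hbm : b ∈ A) :
    d a b ≤ diamd d A := le_csSup hb ⟨a, ha, b, hbm, rfl⟩

lemma diamd_le {X : Type*} {d : X → X → ℝ} {A : Set X} {M : ℝ}
    (hne : A.Nonempty) (h : ∀ a ∈ A, ∀ b ∈ A, d a b ≤ M) : diamd d A ≤ M := by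
  apply csSup_le
  · obtain ⟨a, ha⟩ := hne; exact ⟨d a a, a, ha, a, ha, rfl⟩
  · rintro r ⟨a, ha, b, hb, rfl⟩; exact h a ha b hb

lemma diamd_orb2_nonneg {X : Type*} {d : X → X → ℝ} {s : ℝ} (hd : IsBMetric d s)
    (T : X → X) (x y : X) (hb : BddAbove (distSet d (orb2 T x y))) :
    0 ≤ diamd d (orb2 T x y) := by
  have h0 : d x x = 0 := (hd.2.2.1 x x).mpr rfl
  calc (0:ℝ) = d x x := h0.symm
    _ ≤ _ := dist_le_diamd hb (mem_orb2_left T x y) (mem_orb2_left T x y)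

/-- quasi-triangle inequality for orbit diameters -/
lemma diamd_orb2_tri {X : Type*} {d : X → X → ℝ} {s : ℝ} (hd : IsBMetric d s)
    (T : X → X) (hb : ∀ x y : X, BddAbove (distSet d (orb2 T x y))) (a b c : X) :
    diamd d (orb2 T a c) ≤ s * (diamd d (orb2 T a b) + diamd d (orb2 T b c)) := by
  obtain ⟨hs, hnn, heq, hsym, htri⟩ := hd
  set A := diamd d (orb2 T a b) with hA
  set B := diamd d (orb2 T b c) with hB
  have hA0 : 0 ≤ A := diamd_orb2_nonneg ⟨hs, hnn, heq, hsym, htri⟩ T a b (hb a b)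
  have hB0 : 0 ≤ B := diamd_orb2_nonneg ⟨hs, hnn, heq, hsym, htri⟩ T b c (hb b c)
  apply diamd_le ⟨a, mem_orb2_left T a c⟩
  intro u hu v hv
  have key : ∀ u v : X, u ∈ orb T a → v ∈ orb T c → d u v ≤ s * (A + B) := by
    intro u v hu hv
    have h1 : d u b ≤ A := dist_le_diamd (hb a b) (Or.inl hu) (mem_orb2_right T a b)
    have h2 : d b v ≤ B := dist_le_diamd (hb b c) (mem_orb2_left T b c) (Or.inr hv)
    calc d u v ≤ s * (d u b + d b v) := htri u v b
      _ ≤ s * (A + B) := by nlinarith [hnn u b, hnn b v]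
  rcases hu with hu | hu <;> rcases hv with hv | hv
  · have : d u v ≤ A := dist_le_diamd (hb a b) (Or.inl hu) (Or.inl hv)
    nlinarith
  · exact key u v hu hv
  · have := key v u hv hu; rw [hsym] at this; exact this
  · have : d u v ≤ B := dist_le_diamd (hb b c) (Or.inr hu) (Or.inr hv)
    nlinarith

theorem stmt10 {X : Type*} (d : X → X → ℝ) (s : ℝ)
    (hX : IsCompleteBMetric d s)
    (T : ℕ → X → X) (hT : ∀ i : ℕ, IsWeakQuasiContraction d (T i))
    (hmono : ∀ i j : ℕ, ∀ x y : X,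
      diamd d (orb2 (T j) (T i x) (T i y)) ≤ diamd d (orb2 (T j) x y))
    (𝓕 : Set (ℕ → ℕ)) (hF : PropF 𝓕)
    (hP8 : ∀ ε > (0 : ℝ), ∃ n : ℕ, ∀ f ∈ 𝓕, ∀ x y : X,
      d (compSeq T f n x) (compSeq T f n y) < ε) :
    ∀ ε > (0 : ℝ), ∃ δ > (0 : ℝ), ∃ n : ℕ, ∀ f ∈ 𝓕, ∀ x y : ℕ → X,
      (∀ i j : ℕ, diamd d (orb2 (T (f j)) (x (i + 1)) (T (f i) (x i))) ≤ δ) →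
      (∀ i j : ℕ, diamd d (orb2 (T (f j)) (y (i + 1)) (T (f i) (y i))) ≤ δ) →
      ∀ i ≥ n, d (x i) (y i) < ε := by
  obtain ⟨hd, _⟩ := hX
  obtain ⟨hs, hnn, heq, hsym, htri⟩ := hd
  have hs0 : (0:ℝ) < s := lt_of_lt_of_le one_pos hs
  intro ε hε
  obtain ⟨m, hm⟩ := hP8 (ε / (2 * s ^ 2)) (by positivity)
  set K : ℝ := (m + 1) * s ^ (m + 1) with hKdef
  have hK1 : (1:ℝ) ≤ K := by
    have h1 : (1:ℝ) ≤ s ^ (m+1) := one_le_pow₀ hs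
    have h2 : (1:ℝ) ≤ (m:ℝ) + 1 := by have := Nat.cast_nonneg (α := ℝ) m; linarith
    nlinarith
  have hK0 : (0:ℝ) < K := lt_of_lt_of_le one_pos hK1
  set δ : ℝ := ε / (4 * s ^ 2 * K) with hδdef
  have hδ0 : 0 < δ := by positivity
  refine ⟨δ, hδ0, m + 2, ?_⟩
  intro f hf x y hx hy i hi
  set p := i - (m + 1) with hpdef
  have hpi : p + (m + 1) = i := by omega
  have hp1 : 0 < p := by omega
  set g : ℕ → ℕ := fun j => f (j + p) with hgdef
  have hfg : g ∈ 𝓕 := hF f hf p hp1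
  have hb : ∀ j : ℕ, ∀ a b : X, BddAbove (distSet d (orb2 (T j) a b)) :=
    fun j => (hT j).1
  have hbm : IsBMetric d s := ⟨hs, hnn, heq, hsym, htri⟩
  -- key claim: pseudo-orbit tracks true orbit
  have claim : ∀ z : ℕ → X,
      (∀ i j : ℕ, diamd d (orb2 (T (f j)) (z (i + 1)) (T (f i) (z i))) ≤ δ) →
      ∀ k j : ℕ, diamd d (orb2 (T (f j)) (z (p + k + 1)) (compSeq T g k (z p)))
        ≤ δ * ((k + 1) * s ^ (k + 1)) := by
    intro z hz
    intro k
    induction k with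
    | zero =>
      intro j
      have h0 : compSeq T g 0 (z p) = T (f p) (z p) := by
        simp [compSeq, hgdef]
      rw [h0]
      have := hz p j
      have hδs : δ ≤ δ * ((0 + 1 : ℕ) + 1 - 1) * s ^ 1 := by push_cast; nlinarith
      calc diamd d (orb2 (T (f j)) (z (p + 0 + 1)) (T (f p) (z p))) ≤ δ := hz p j
        _ ≤ δ * (((0:ℕ) + 1) * s ^ (0 + 1)) := by push_cast; nlinarith
    | succ k ih =>
      intro j
      have hcomp : compSeq T g (k + 1) (z p)
          = T (f (p + k + 1)) (compSeq T g k (z p)) := by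
        have : g (k + 1) = f (p + k + 1) := by simp [hgdef]; ring_nf
        simp [compSeq, this]
      rw [hcomp]
      have htri2 := diamd_orb2_tri hbm (T (f j)) (fun a b => hb (f j) a b)
        (z (p + k + 1 + 1)) (T (f (p + k + 1)) (z (p + k + 1)))
        (T (f (p + k + 1)) (compSeq T g k (z p)))
      have h1 : diamd d (orb2 (T (f j)) (z (p + k + 1 + 1))
          (T (f (p + k + 1)) (z (p + k + 1)))) ≤ δ := hz (p + k + 1) j
      have h2 : diamd d (orb2 (T (f j)) (T (f (p + k + 1)) (z (p + k + 1)))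
          (T (f (p + k + 1)) (compSeq T g k (z p))))
          ≤ diamd d (orb2 (T (f j)) (z (p + k + 1)) (compSeq T g k (z p))) :=
        hmono (f (p + k + 1)) (f j) _ _
      have ihj := ih j
      have hpow : s ^ (k + 1 + 1) = s * s ^ (k + 1) := by ring
      have hsk : s ≤ s ^ (k + 1 + 1) := by
        calc s = s * 1 := by ring
          _ ≤ s * s ^ (k + 1) := by
            have : (1:ℝ) ≤ s ^ (k+1) := one_le_pow₀ hs
            nlinarith
          _ = s ^ (k + 1 + 1) := by ring
    
      have hfinal : diamd d (orb2 (T (f j)) (z (p + (k + 1) + 1))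
          (T (f (p + k + 1)) (compSeq T g k (z p))))
          ≤ δ * (((k:ℝ) + 1 + 1) * s ^ (k + 1 + 1)) := by
        have heqidx : p + (k + 1) + 1 = p + k + 1 + 1 := by omega
        rw [heqidx]
        calc diamd d (orb2 (T (f j)) (z (p + k + 1 + 1))
              (T (f (p + k + 1)) (compSeq T g k (z p))))
            ≤ s * (diamd d (orb2 (T (f j)) (z (p + k + 1 + 1))
                (T (f (p + k + 1)) (z (p + k + 1))))
              + diamd d (orb2 (T (f j)) (T (f (p + k + 1)) (z (p + k + 1)))
                (T (f (p + k + 1)) (compSeq T g k (z p))))) := htri2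
          _ ≤ s * (δ + δ * (((k:ℝ) + 1) * s ^ (k + 1))) :=
              mul_le_mul_of_nonneg_left (add_le_add h1 (le_trans h2 ihj)) hs0.le
          _ ≤ δ * (((k:ℝ) + 1 + 1) * s ^ (k + 1 + 1)) := by
              have h1' : (1:ℝ) ≤ s ^ (k + 1) := one_le_pow₀ hs
              have hss : δ * s ≤ δ * (s * s ^ (k + 1)) := by
                nlinarith [mul_nonneg (mul_pos hδ0 hs0).le (sub_nonneg.mpr h1')]
              have hexp : s ^ (k + 1 + 1) = s * s ^ (k + 1) := by ring
              rw [hexp]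
              nlinarith [hss]
      calc diamd d (orb2 (T (f j)) (z (p + (k + 1) + 1))
            (T (f (p + k + 1)) (compSeq T g k (z p))))
          ≤ δ * (((k:ℝ) + 1 + 1) * s ^ (k + 1 + 1)) := hfinal
        _ = δ * ((((k:ℕ) + 1 : ℕ) + 1) * s ^ (k + 1 + 1)) := by push_cast; ring
  -- apply claim to x and y at k = m
  have hxw := claim x hx m 0
  have hyw := claim y hy m 0
  set w : X := compSeq T g m (x p) with hw
  set w' : X := compSeq T g m (y p) with hw'
  have hxi : p + m + 1 = i := by omega
  rw [hxi] at hxw hyw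
  have hdxw : d (x i) w ≤ δ * K := by
    have := dist_le_diamd (hb (f 0) (x i) w) (mem_orb2_left (T (f 0)) (x i) w)
      (mem_orb2_right (T (f 0)) (x i) w)
    calc d (x i) w ≤ diamd d (orb2 (T (f 0)) (x i) w) := this
      _ ≤ δ * ((m + 1) * s ^ (m + 1)) := hxw
      _ = δ * K := by rw [hKdef]
  have hdyw : d (y i) w' ≤ δ * K := by
    have := dist_le_diamd (hb (f 0) (y i) w') (mem_orb2_left (T (f 0)) (y i) w')
      (mem_orb2_right (T (f 0)) (y i) w')
    calc d (y i) w' ≤ diamd d (orb2 (T (f 0)) (y i) w') := this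
      _ ≤ δ * ((m + 1) * s ^ (m + 1)) := hyw
      _ = δ * K := by rw [hKdef]
  have hww' : d w w' < ε / (2 * s ^ 2) := hm g hfg (x p) (y p)
  have t1 : d (x i) (y i) ≤ s * (d (x i) w + d w (y i)) := htri _ _ _
  have t2 : d w (y i) ≤ s * (d w w' + d w' (y i)) := htri _ _ _
  have hsymw : d w' (y i) = d (y i) w' := hsym _ _
  have hδK : 2 * s ^ 2 * K * δ = ε / 2 := by
    rw [hδdef]; field_simp; ring
  have hε2 : s ^ 2 * d w w' < ε / 2 := by
    have h2s : s ^ 2 * (ε / (2 * s ^ 2)) = ε / 2 := by field_simp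
    have := mul_lt_mul_of_pos_left hww' (show (0:ℝ) < s ^ 2 by positivity)
    linarith
  have step : d (x i) (y i)
      ≤ s * d (x i) w + s * s * d w w' + s * s * d w' (y i) := by
    calc d (x i) (y i) ≤ s * (d (x i) w + d w (y i)) := t1
      _ ≤ s * (d (x i) w + s * (d w w' + d w' (y i))) :=
          mul_le_mul_of_nonneg_left (add_le_add le_rfl t2) hs0.le
      _ = s * d (x i) w + s * s * d w w' + s * s * d w' (y i) := by ring
  have b1 : s * d (x i) w ≤ s * (δ * K) := mul_le_mul_of_nonneg_left hdxw hs0.le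
  have b2 : s * s * d w' (y i) ≤ s * s * (δ * K) := by
    rw [hsymw]
    exact mul_le_mul_of_nonneg_left hdyw (by positivity)
  have b3 : s * s * d w w' < ε / 2 := by
    have hss : s * s = s ^ 2 := by ring
    rw [hss]; exact hε2
  have b4 : s * (δ * K) ≤ s * s * (δ * K) := by
    nlinarith [mul_nonneg (mul_nonneg hs0.le (sub_nonneg.mpr hs)) (mul_nonneg hδ0.le hK0.le)]
  linarith [step, b1, b2, b3, b4, hδK]
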